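/- If a standard immaculate tableau P of shape α satisfies π_i(P) = P for every i ∈ {1,...,n-1} \ S(α), then P equals the super-standard tableau Ŝ_α whose first row is 1,...,α₁, second row is α₁+1,...,α₁+α₂, etc. -/

import Mathlib

/-- An immaculate tableau of shape `α` and content `β`, encoded as a list of rows. -/
def IsImmaculate (T : List (List ℕ)) (α β : List ℕ) : Prop :=
  T.map List.length = α ∧
  (∀ r ∈ T, List.Chain' (· ≤ ·) r) ∧
  List.Chain' (· < ·) (T.map List.headI) ∧
  (∀ x ∈ T.flatten, 0 < x) ∧
  (∀ i : ℕ, T.flatten.count (i + 1) = β.getD i 0)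

/-- The (0-based) index of the row of `T` containing the entry `x`. -/
def rowIdx (T : List (List ℕ)) (x : ℕ) : ℕ :=
  T.findIdx fun r => decide (x ∈ r)

/-- The proper partial sums `α₁, α₁+α₂, …` of `α` excluding the total sum,
accumulated from `s`; `properSums 0 α` is the set `S(α)`. -/
def properSums : ℕ → List ℕ → List ℕ
  | _, [] => []
  | _, [_] => []
  | s, a :: b :: rest => (s + a) :: properSums (s + a) (b :: rest)

/-- The super-standard tableau `Ŝ_α` (starting entries at `s + 1`): first row
`1, …, α₁`, second row `α₁+1, …, α₁+α₂`, etc. -/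
def superStandard : ℕ → List ℕ → List (List ℕ)
  | _, [] => []
  | s, a :: rest => (List.range' (s + 1) a) :: superStandard (s + a) rest

lemma properSums_ge : ∀ (rest : List ℕ) (s a x : ℕ),
    x ∈ properSums s (a :: rest) → s + a ≤ x := by
  intro rest
  induction rest with
  | nil => intro s a x hx; simp [properSums] at hx
  | cons b r ih =>
    intro s a x hx
    simp only [properSums, List.mem_cons] at hx
    rcases hx with h | h
    · omega
    · have := ih (s + a) b x h; omega

lemma headI_le_of_mem {ρ : List ℕ} (hρ : List.Chain' (· ≤ ·) ρ) {x : ℕ}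
    (hx : x ∈ ρ) : ρ.headI ≤ x := by
  cases ρ with
  | nil => simp at hx
  | cons h t =>
    simp only [List.Chain', List.isChain_iff_pairwise] at hρ
    rcases List.mem_cons.1 hx with rfl | hx
    · simp
    · exact List.rel_of_pairwise_cons hρ hx

lemma aux_superstandard : ∀ (α : List ℕ) (s : ℕ) (P : List (List ℕ)),
    (∀ a ∈ α, 0 < a) →
    P.map List.length = α →
    (∀ r ∈ P, List.Chain' (· ≤ ·) r) →
    List.Chain' (· < ·) (P.map List.headI) →
    (∀ x : ℕ, P.flatten.count x = if s + 1 ≤ x ∧ x ≤ s + α.sum then 1 else 0) →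
    (∀ i : ℕ, s + 1 ≤ i → i < s + α.sum → i ∉ properSums s α →
        rowIdx P (i + 1) ≤ rowIdx P i) →
    P = superStandard s α := by
  intro α
  induction α with
  | nil =>
    intro s P _ hlen _ _ _ _
    simp only [List.map_eq_nil_iff] at hlen
    simp [superStandard, hlen]
  | cons a rest ih =>
    intro s P hα hlen hrows hheads hcount hfix
    obtain ⟨r, Q, rfl⟩ : ∃ r Q, P = r :: Q := by
      cases P with
      | nil => simp at hlen
      | cons r Q => exact ⟨r, Q, rfl⟩
    simp only [List.map_cons, List.cons.injEq] at hlen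
    obtain ⟨hra, hQlen⟩ := hlen
    have ha : 0 < a := hα a (by simp)
    have hsum : (a :: rest).sum = a + rest.sum := List.sum_cons
    -- every entry of the flatten lies in [s+1, s + sum]
    have hmemflat : ∀ x ∈ (r :: Q).flatten, s + 1 ≤ x ∧ x ≤ s + (a + rest.sum) := by
      intro x hx
      have h1 : 0 < List.count x (r :: Q).flatten := List.count_pos_iff.2 hx
      have h2 := hcount x
      rw [hsum] at h2
      by_contra hc
      rw [if_neg hc] at h2
      omega
    -- base: s + 1 ∈ r
    have hbase : s + 1 ∈ r := by
      have h1 : s + 1 ∈ (r :: Q).flatten := by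
        rw [← List.count_pos_iff, hcount]
        have : s + 1 ≤ s + (a :: rest).sum := by rw [hsum]; omega
        rw [if_pos ⟨le_refl _, this⟩]; omega
      rw [List.flatten_cons, List.mem_append] at h1
      rcases h1 with h1 | h1
      · exact h1
      · exfalso
        obtain ⟨ρ, hρQ, hρmem⟩ := List.mem_flatten.1 h1
        have hρle : ρ.headI ≤ s + 1 := headI_le_of_mem (hrows ρ (by simp [hρQ])) hρmem
        have hrne : r ≠ [] := by
          intro h; rw [h] at hra; simp at hra; omega
        have hrh : r.headI ∈ r := by
          cases r with
          | nil => exact absurd rfl hrne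
          | cons h t => simp
        have hrhge : s + 1 ≤ r.headI :=
          (hmemflat r.headI (by rw [List.flatten_cons, List.mem_append]; exact Or.inl hrh)).1
        have hlt : r.headI < ρ.headI := by
          simp only [List.map_cons, List.Chain', List.isChain_iff_pairwise] at hheads
          exact List.rel_of_pairwise_cons hheads (List.mem_map_of_mem hρQ)
        omega
    -- inductive: all of s+1, ..., s+a are in r
    have hmem : ∀ j, 1 ≤ j → j ≤ a → s + j ∈ r := by
      intro j
      induction j with
      | zero => omega
      | succ k ihk =>
        intro _ hk
        rcases Nat.eq_zero_or_pos k with rfl | hk1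
        · exact hbase
        · have hkr : s + k ∈ r := ihk hk1 (by omega)
          have hnot : s + k ∉ properSums s (a :: rest) := by
            intro hc; have := properSums_ge rest s a _ hc; omega
          have hrow := hfix (s + k) (by omega) (by rw [hsum]; omega) hnot
          have h0 : rowIdx (r :: Q) (s + k) = 0 := by
            unfold rowIdx
            rw [List.findIdx_cons]
            simp [hkr]
          rw [h0, Nat.le_zero] at hrow
          show s + k + 1 ∈ r
          unfold rowIdx at hrow
          rw [List.findIdx_cons] at hrow
          by_contra hc
          simp [hc] at hrow
    -- r is nodup
    have hrnodup : r.Nodup := by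
      rw [List.nodup_iff_count_le_one]
      intro x
      have h1 := hcount x
      rw [List.flatten_cons, List.count_append] at h1
      split_ifs at h1 <;> omega
    -- r = range' (s+1) a
    have hreq : r = List.range' (s + 1) a := by
      have hsub : List.range' (s + 1) a ⊆ r := by
        intro x hx
        rw [List.mem_range'_1] at hx
        have := hmem (x - s) (by omega) (by omega)
        have hxe : s + (x - s) = x := by omega
        rwa [hxe] at this
      have hsp : List.Subperm (List.range' (s + 1) a) r :=
        List.subperm_of_subset List.nodup_range' hsub
      have hperm : List.Perm (List.range' (s + 1) a) r :=
        hsp.perm_of_length_le (by rw [hra, List.length_range'])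
      have hsort1 : List.Pairwise (· ≤ ·) (List.range' (s + 1) a) :=
        (List.pairwise_lt_range' (s := s + 1) (n := a)).imp le_of_lt
      have hsort2 : List.Pairwise (· ≤ ·) r :=
        List.isChain_iff_pairwise.1 (hrows r (by simp))
      exact (List.Perm.eq_of_pairwise (fun _ _ _ _ h1 h2 => le_antisymm h1 h2) hsort1 hsort2 hperm).symm
    -- apply induction hypothesis to Q
    have hQ : Q = superStandard (s + a) rest := by
      apply ih (s + a) Q
      · intro b hb; exact hα b (by simp [hb])
      · exact hQlen
      · intro ρ hρ; exact hrows ρ (by simp [hρ])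
      · rw [List.map_cons] at hheads; exact hheads.tail
      · intro x
        have h1 := hcount x
        rw [List.flatten_cons, List.count_append, hsum, hreq] at h1
        have h2 : List.count x (List.range' (s + 1) a) =
            if x ∈ List.range' (s + 1) a then 1 else 0 := by
          split_ifs with hm
          · exact List.count_eq_one_of_mem List.nodup_range' hm
          · exact List.count_eq_zero.2 hm
        rw [h2] at h1
        by_cases hm : x ∈ List.range' (s + 1) a
        · have hm' := List.mem_range'_1.1 hm
          rw [if_pos hm, if_pos (by omega)] at h1
          rw [if_neg (by omega)]
          omega
        · rw [if_neg hm] at h1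
          rw [List.mem_range'_1] at hm
          split_ifs at h1 with h3
          · rw [if_pos (by omega)]; omega
          · rw [if_neg (by omega)]; omega
      · intro i hi1 hi2 hips
        have hips' : i ∉ properSums s (a :: rest) := by
          cases rest with
          | nil => simp [List.sum_nil] at hi2; omega
          | cons b r' =>
            simp only [properSums, List.mem_cons]
            push_neg
            exact ⟨by omega, hips⟩
        have hrow := hfix i (by omega) (by rw [hsum]; omega) hips'
        have hnr1 : i ∉ r := by
          rw [hreq, List.mem_range'_1]; omega
        have hnr2 : i + 1 ∉ r := by
          rw [hreq, List.mem_range'_1]; omega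
        unfold rowIdx at hrow ⊢
        rw [List.findIdx_cons, List.findIdx_cons] at hrow
        simp [hnr1, hnr2] at hrow
        omega
    rw [hreq, hQ]
    simp [superStandard]

/-- If a standard immaculate tableau `P` of shape `α` satisfies `π_i(P) = P`
(i.e. `i` lies in a row weakly below `i+1`) for every `i ∈ {1, …, n-1} \ S(α)`,
then `P` is the super-standard tableau `Ŝ_α`. -/
theorem fixed_by_nondescents_superstandard (n : ℕ) (α : List ℕ)
    (hα : ∀ a ∈ α, 0 < a) (hsum : α.sum = n) (P : List (List ℕ))
    (hP : IsImmaculate P α (List.replicate n 1))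
    (hfix : ∀ i : ℕ, 1 ≤ i → i < n → i ∉ properSums 0 α →
      rowIdx P (i + 1) ≤ rowIdx P i) :
    P = superStandard 0 α := by
  obtain ⟨hlen, hrows, hheads, hpos, hcnt⟩ := hP
  apply aux_superstandard α 0 P hα hlen hrows hheads
  · intro x
    rw [hsum]
    cases x with
    | zero =>
      rw [if_neg (by omega)]
      exact List.count_eq_zero.2 fun h => by simpa using hpos 0 h
    | succ i =>
      have h1 := hcnt i
      have h2 : (List.replicate n (1 : ℕ)).getD i 0 = if i < n then 1 else 0 := by
        rcases lt_or_ge i n with h | h <;>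
          simp [List.getD_eq_getElem?_getD, List.getElem?_replicate, h, Nat.not_lt.2 h]
      rw [h2] at h1
      rw [h1]
      split_ifs <;> omega
  · intro i hi1 hi2 hips
    rw [hsum] at hi2
    exact hfix i hi1 (by omega) hips
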